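/- Let m : Fin n → ℕ satisfy m_i ≥ 2 for every i, and let I be the (pure power) ideal generated by X_1^{m_1},…,X_n^{m_n}. Then the survival complex of A/I has exactly one truly isolated point: an exponent vector a satisfies X^a ∉ I and X_i·X^a ∈ I for all i if and only if a_i = m_i − 1 for every i. -/

import Mathlib

open MvPolynomial

lemma purePower_mem_iff {k : Type*} [Field k] {n : ℕ}
    (m : Fin n → ℕ) (b : (Fin n) →₀ ℕ) :
    monomial b (1 : k) ∈
      Ideal.span (Set.range fun i : Fin n => (X i : MvPolynomial (Fin n) k) ^ m i) ↔
      ∃ i, m i ≤ b i := by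
  have h : (Set.range fun i : Fin n => (X i : MvPolynomial (Fin n) k) ^ m i) =
      (fun s => monomial s (1 : k)) '' (Set.range fun i => Finsupp.single i (m i)) := by
    ext p
    simp only [Set.mem_range, Set.mem_image]
    constructor
    · rintro ⟨i, rfl⟩
      exact ⟨Finsupp.single i (m i), ⟨i, rfl⟩, by rw [X_pow_eq_monomial]⟩
    · rintro ⟨s, ⟨i, rfl⟩, rfl⟩
      exact ⟨i, by rw [X_pow_eq_monomial]⟩
  rw [h, mem_ideal_span_monomial_image]
  have hsupp : (monomial b (1:k)).support = {b} := by
    classical rw [support_monomial]; simp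
  rw [hsupp]
  simp only [Finset.mem_singleton, Set.mem_range]
  constructor
  · intro H
    obtain ⟨si, ⟨i, rfl⟩, hle⟩ := H b rfl
    exact ⟨i, by simpa using hle i⟩
  · rintro ⟨i, hi⟩ xi rfl
    refine ⟨Finsupp.single i (m i), ⟨i, rfl⟩, ?_⟩
    intro j
    rcases eq_or_ne j i with rfl | hj
    · simpa using hi
    · simp [Finsupp.single_apply, hj.symm]

/-- For a pure power ideal `I = (X_1^{m_1},…,X_n^{m_n})` with all `m_i ≥ 2`, the
survival complex of `A/I` has exactly one truly isolated point, namely the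
exponent vector `a` with `a_i = m_i − 1` for all `i`. -/
theorem purePower_unique_truly_isolated
    {k : Type*} [Field k] {n : ℕ} (hn : 1 ≤ n)
    (m : Fin n → ℕ) (hm : ∀ i, 2 ≤ m i)
    (I : Ideal (MvPolynomial (Fin n) k))
    (hI : I = Ideal.span (Set.range fun i : Fin n => (X i : MvPolynomial (Fin n) k) ^ m i))
    (a : (Fin n) →₀ ℕ) :
    (monomial a (1 : k) ∉ I ∧ ∀ i : Fin n, X i * monomial a (1 : k) ∈ I) ↔
      ∀ i : Fin n, a i = m i - 1 := by
  subst hI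
  have hX : ∀ i : Fin n, (X i : MvPolynomial (Fin n) k) * monomial a 1
      = monomial (a + Finsupp.single i 1) 1 := by
    intro i
    rw [X, monomial_mul, one_mul, add_comm]
  constructor
  · rintro ⟨hnot, hall⟩
    intro i
    have hlt : ∀ j, a j < m j := by
      intro j
      by_contra h
      exact hnot ((purePower_mem_iff m a).2 ⟨j, le_of_not_gt h⟩)
    have := hall i
    rw [hX i, purePower_mem_iff] at this
    obtain ⟨j, hj⟩ := this
    rcases eq_or_ne j i with rfl | hji
    · simp only [Finsupp.add_apply, Finsupp.single_eq_same] at hj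
      have := hlt j
      omega
    · simp only [Finsupp.add_apply, Finsupp.single_eq_of_ne' hji.symm, add_zero] at hj
      exact absurd hj (not_le.2 (hlt j))
  · intro ha
    constructor
    · rw [purePower_mem_iff]
      rintro ⟨i, hi⟩
      have := hm i
      rw [ha i] at hi
      omega
    · intro i
      rw [hX i, purePower_mem_iff]
      refine ⟨i, ?_⟩
      have := hm i
      simp only [Finsupp.add_apply, Finsupp.single_eq_same, ha i]
      omega
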